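/- Let G₁ be an additive commutative group, G₂ a multiplicative commutative group, and e : G₁ → G₁ → G₂ a symmetric bilinear pairing. Let P, Q, W ∈ G₁ and let α, x_S, r, h be integers. Set P_pub = α·P, Y_S = x_S·P, D_S = α·Q, R = r·P, and V = D_S + r·W + h·(α·Y_S). Then e(V, P) = e(Q + h·Y_S, P_pub) · e(R, W). (This is Theorem 3 of the paper: in Kumar et al.'s CLS scheme, a type 2 adversary — the malicious KGC knowing the master secret α and hence the partial private key D_S = α·Q, but not the signer's secret value x_S — can forge a valid signature (R, V) on any message with hash value h under any state information with hash W, on behalf of any signer with identity hash Q and public key Y_S.) -/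

import Mathlib

/-- Theorem 3 of the paper: in Kumar et al.'s CLS scheme, a type 2 adversary (the
malicious KGC knowing the master secret `α`, hence the partial private key
`D_S = α • Q`, but not the signer's secret value `x_S`) can forge a valid signature
`(R, V) = (r • P, D_S + r • W + h • (α • Y_S))` on any message with hash value `h`
under any state information with hash `W`, on behalf of any signer with identity hash
`Q` and public key `Y_S = x_S • P`. -/
theorem kumar_type2_forgery
    {G₁ G₂ : Type*} [AddCommGroup G₁] [CommGroup G₂]
    (e : G₁ → G₁ → G₂)
    (he_left : ∀ a b c : G₁, e (a + b) c = e a c * e b c)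
    (he_right : ∀ a b c : G₁, e a (b + c) = e a b * e a c)
    (he_symm : ∀ a b : G₁, e a b = e b a)
    (P Q W : G₁) (α x_S r h : ℤ)
    (P_pub : G₁) (hPpub : P_pub = α • P)
    (Y_S : G₁) (hYS : Y_S = x_S • P)
    (D_S : G₁) (hDS : D_S = α • Q)
    (R : G₁) (hR : R = r • P)
    (V : G₁) (hV : V = D_S + r • W + h • (α • Y_S)) :
    e V P = e (Q + h • Y_S) P_pub * e R W := by
  have hl : ∀ (n : ℤ) (a b : G₁), e (n • a) b = e a b ^ n := by
    intro n a b
    have := (AddMonoidHom.mk' (fun x => Additive.ofMul (e x b))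
      (fun x y => congrArg Additive.ofMul (he_left x y b))).map_zsmul n a
    exact congrArg Additive.toMul this
  have hr' : ∀ (n : ℤ) (a b : G₁), e a (n • b) = e a b ^ n := by
    intro n a b
    rw [he_symm, hl, he_symm]
  subst hPpub hYS hDS hR hV
  simp only [he_left, hl, hr', he_symm W P, ← zpow_mul]
  rw [mul_right_comm, show x_S * α * h = α * x_S * h by ring]
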